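/- arXiv:1908.05165 — 2 statements merged into one kernel-verified Lean document; each statement's English description precedes it below -/
import Mathlib

section
/- Let (λ_n)_{n∈ℕ} be a sequence of nonzero real numbers satisfying a Weyl-type counting bound of order m. Then there exist constants C > 0 and c > 0 such that for all t ≥ 1, Σ_n (1/2)·erfc(|λ_n|·√t) ≤ C·exp(−c·t). -/
open MeasureTheory Real Set

/-- A sequence `(λ_n)` of real numbers satisfies a Weyl-type counting bound of order `m`
if there is a constant `C > 0` such that for every `T ≥ 0` the set `{n : |λ_n| ≤ T}` is
finite with cardinality at most `C·(1+T)^m`. -/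
def WeylBound (lam : ℕ → ℝ) (m : ℕ) : Prop :=
  ∃ C > (0 : ℝ), ∀ T : ℝ, 0 ≤ T →
    {n : ℕ | |lam n| ≤ T}.Finite ∧ ({n : ℕ | |lam n| ≤ T}.ncard : ℝ) ≤ C * (1 + T) ^ m

/-- The complementary error function `erfc(x) = (2/√π) ∫_x^∞ exp(−ξ²) dξ`. -/
noncomputable def erfc (x : ℝ) : ℝ :=
  (2 / Real.sqrt π) * ∫ ξ in Ioi x, Real.exp (-ξ ^ 2)

open Filter in
lemma integral_exp_neg_mul_Ioi_aux {b a : ℝ} (hb : 0 < b) :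
    ∫ x in Ioi a, Real.exp (-(b * x)) = Real.exp (-(b * a)) / b := by
  have hderiv : ∀ x ∈ Ioi a,
      HasDerivAt (fun y => Real.exp (-(b * y)) * (-b⁻¹)) (Real.exp (-(b * x))) x := by
    intro x _
    have h1 : HasDerivAt (fun y : ℝ => -(b * y)) (-b) x := by
      simpa using ((hasDerivAt_id x).const_mul (-b))
    have h2 := (h1.exp).mul_const (-b⁻¹)
    refine h2.congr_deriv ?_
    simp only [mul_assoc, neg_mul_neg, mul_inv_cancel₀ hb.ne', mul_one]
  have hint : IntegrableOn (fun x => Real.exp (-(b * x))) (Ioi a) := by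
    simpa [neg_mul] using exp_neg_integrableOn_Ioi a hb
  have htend : Tendsto (fun y => Real.exp (-(b * y)) * (-b⁻¹)) atTop (nhds 0) := by
    have h0 : Tendsto (fun y : ℝ => b * y) atTop atTop :=
      Tendsto.const_mul_atTop hb tendsto_id
    have h1 : Tendsto (fun y : ℝ => -(b * y)) atTop atBot :=
      tendsto_neg_atTop_atBot.comp h0
    have h2 : Tendsto (fun y : ℝ => Real.exp (-(b * y))) atTop (nhds 0) :=
      Real.tendsto_exp_atBot.comp h1
    simpa using h2.mul_const (-b⁻¹)
  have hcont : ContinuousWithinAt (fun y => Real.exp (-(b * y)) * (-b⁻¹)) (Ici a) a :=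
    Continuous.continuousWithinAt (by continuity)
  rw [MeasureTheory.integral_Ioi_of_hasDerivAt_of_tendsto hcont hderiv hint htend]
  field_simp
  ring

lemma erfc_nonneg (x : ℝ) : 0 ≤ erfc x := by
  unfold erfc
  apply mul_nonneg
  · positivity
  · exact setIntegral_nonneg measurableSet_Ioi (fun ξ _ => (Real.exp_pos _).le)

lemma erfc_le_aux {x : ℝ} (hx : 0 < x) :
    erfc x ≤ 2 / (x * Real.sqrt π) * Real.exp (-(x * x)) := by
  have hπ : 0 < Real.sqrt π := Real.sqrt_pos.2 Real.pi_pos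
  have hint1 : IntegrableOn (fun ξ : ℝ => Real.exp (-ξ ^ 2)) (Ioi x) := by
    have := (integrable_exp_neg_mul_sq (one_pos)).integrableOn (s := Ioi x)
    simpa using this
  have hint2 : IntegrableOn (fun ξ : ℝ => Real.exp (-(x * ξ))) (Ioi x) := by
    simpa [neg_mul] using exp_neg_integrableOn_Ioi x hx
  have hmono : ∀ ξ ∈ Ioi x, Real.exp (-ξ ^ 2) ≤ Real.exp (-(x * ξ)) := by
    intro ξ hξ
    rw [mem_Ioi] at hξ
    apply Real.exp_le_exp.2
    nlinarith
  have h1 : (∫ ξ in Ioi x, Real.exp (-ξ ^ 2)) ≤ ∫ ξ in Ioi x, Real.exp (-(x * ξ)) :=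
    setIntegral_mono_on hint1 hint2 measurableSet_Ioi hmono
  have h2 : (∫ ξ in Ioi x, Real.exp (-(x * ξ))) = Real.exp (-(x * x)) / x :=
    integral_exp_neg_mul_Ioi_aux hx
  unfold erfc
  calc (2 / Real.sqrt π) * ∫ ξ in Ioi x, Real.exp (-ξ ^ 2)
      ≤ (2 / Real.sqrt π) * (Real.exp (-(x * x)) / x) := by
        rw [← h2]; exact mul_le_mul_of_nonneg_left h1 (by positivity)
    _ = 2 / (x * Real.sqrt π) * Real.exp (-(x * x)) := by
        field_simp

/-- Large-time exponential decay of `Σ (1/2)·erfc(|λ_n|·√t)`. -/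
theorem stmt_8 (m : ℕ) (hm : 0 < m) (lam : ℕ → ℝ) (hlam : ∀ n, lam n ≠ 0)
    (hW : WeylBound lam m) :
    ∃ C > (0 : ℝ), ∃ c > (0 : ℝ), ∀ t : ℝ, 1 ≤ t →
      (∑' n : ℕ, (1 / 2 : ℝ) * erfc (|lam n| * Real.sqrt t)) ≤ C * Real.exp (-(c * t)) := by
  obtain ⟨C0, hC0, hWb⟩ := hW
  -- a uniform positive lower bound on |lam n|
  have hδ : ∃ δ : ℝ, 0 < δ ∧ δ ≤ 1 ∧ ∀ n, δ ≤ |lam n| := by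
    have hS : {n : ℕ | |lam n| ≤ 1}.Finite := (hWb 1 zero_le_one).1
    by_cases hne : hS.toFinset.Nonempty
    · refine ⟨min 1 (hS.toFinset.inf' hne fun n => |lam n|), ?_, min_le_left _ _, ?_⟩
      · apply lt_min one_pos
        obtain ⟨n0, hn0, hval⟩ := hS.toFinset.exists_mem_eq_inf' hne fun n => |lam n|
        rw [hval]
        exact abs_pos.2 (hlam n0)
      · intro n
        by_cases hn : n ∈ hS.toFinset
        · exact le_trans (min_le_right _ _) (Finset.inf'_le _ hn)
        · have : ¬ |lam n| ≤ 1 := by simpa [Set.Finite.mem_toFinset] using hn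
          exact le_trans (min_le_left _ _) (le_of_not_ge this)
    · refine ⟨1, one_pos, le_refl _, fun n => ?_⟩
      have : n ∉ hS.toFinset := fun h => hne ⟨n, h⟩
      have : ¬ |lam n| ≤ 1 := by simpa [Set.Finite.mem_toFinset] using this
      linarith [le_of_not_ge this]
  obtain ⟨δ, hδ0, hδ1, hδlam⟩ := hδ
  set r : ℝ := Real.exp (-(1 / 2)) with hr_def
  have hr0 : 0 < r := Real.exp_pos _
  have hr1 : r < 1 := Real.exp_lt_one_iff.2 (by norm_num)
  -- summability of the dominating series
  have hgsum : Summable (fun k : ℕ => C0 * ((k : ℝ) + 2) ^ m * r ^ k) := by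
    have h1 : Summable (fun n : ℕ => (n : ℝ) ^ m * r ^ n) :=
      summable_pow_mul_geometric_of_norm_lt_one m (by
        rw [Real.norm_eq_abs, abs_of_pos hr0]; exact hr1)
    have h2 : Summable (fun n : ℕ => ((n + 2 : ℕ) : ℝ) ^ m * r ^ (n + 2)) :=
      h1.comp_injective (add_left_injective 2)
    have h3 := h2.mul_left (C0 / r ^ 2)
    apply h3.congr
    intro n
    push_cast
    field_simp
    ring
  set G : ℝ := ∑' k : ℕ, C0 * ((k : ℝ) + 2) ^ m * r ^ k with hG_def
  have hGnonneg : 0 ≤ G :=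
    tsum_nonneg fun k => by positivity
  -- uniform bound on partial sums of exp(-(lam i)^2/2)
  have hB : ∀ N : ℕ, (∑ i ∈ Finset.range N, Real.exp (-(lam i ^ 2 / 2))) ≤ G := by
    intro N
    set key : ℕ → ℕ := fun i => ⌊|lam i|⌋₊ with hkey_def
    have hmaps : ∀ i ∈ Finset.range N, key i ∈ (Finset.range N).image key :=
      fun i hi => Finset.mem_image_of_mem key hi
    rw [← Finset.sum_fiberwise_of_maps_to hmaps (fun i => Real.exp (-(lam i ^ 2 / 2)))]
    have hinner : ∀ k ∈ (Finset.range N).image key,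
        (∑ i ∈ (Finset.range N).filter (fun i => key i = k), Real.exp (-(lam i ^ 2 / 2)))
          ≤ C0 * ((k : ℝ) + 2) ^ m * r ^ k := by
      intro k _
      have hbound : ∀ i ∈ (Finset.range N).filter (fun i => key i = k),
          Real.exp (-(lam i ^ 2 / 2)) ≤ r ^ k := by
        intro i hi
        have hk : key i = k := (Finset.mem_filter.1 hi).2
        have hfloor : (k : ℝ) ≤ |lam i| := hk ▸ Nat.floor_le (abs_nonneg _)
        have hk2 : (k : ℝ) ≤ (k : ℝ) ^ 2 := by
          have : k ≤ k ^ 2 := Nat.le_self_pow two_ne_zero k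
          exact_mod_cast this
        have hsq : (k : ℝ) ≤ lam i ^ 2 := by
          have h2 : (k : ℝ) ^ 2 ≤ |lam i| ^ 2 := by
            apply pow_le_pow_left₀ (Nat.cast_nonneg k) hfloor
          rw [sq_abs] at h2
          linarith
        have : r ^ k = Real.exp (-(k / 2 : ℝ)) := by
          rw [hr_def, ← Real.exp_nat_mul]
          ring_nf
        rw [this]
        apply Real.exp_le_exp.2
        linarith
      have hcard : (((Finset.range N).filter (fun i => key i = k)).card : ℝ)
          ≤ C0 * ((k : ℝ) + 2) ^ m := by
        have hsub : (((Finset.range N).filter (fun i => key i = k)) : Set ℕ)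
            ⊆ {n : ℕ | |lam n| ≤ (k : ℝ) + 1} := by
          intro i hi
          simp only [Finset.coe_filter, Set.mem_setOf_eq] at hi ⊢
          have hk : ⌊|lam i|⌋₊ = k := hi.2
          have := Nat.lt_floor_add_one |lam i|
          rw [hk] at this
          exact_mod_cast this.le
        obtain ⟨hfin, hcard⟩ := hWb ((k : ℝ) + 1) (by positivity)
        have h1 : (((Finset.range N).filter (fun i => key i = k)) : Set ℕ).ncard
            ≤ {n : ℕ | |lam n| ≤ (k : ℝ) + 1}.ncard := Set.ncard_le_ncard hsub hfin
        have h2 : (((Finset.range N).filter (fun i => key i = k)) : Set ℕ).ncard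
            = ((Finset.range N).filter (fun i => key i = k)).card :=
          Set.ncard_coe_finset _
        calc (((Finset.range N).filter (fun i => key i = k)).card : ℝ)
            ≤ ({n : ℕ | |lam n| ≤ (k : ℝ) + 1}.ncard : ℝ) := by
              rw [← h2]; exact_mod_cast h1
          _ ≤ C0 * (1 + ((k : ℝ) + 1)) ^ m := hcard
          _ = C0 * ((k : ℝ) + 2) ^ m := by ring_nf
      calc (∑ i ∈ (Finset.range N).filter (fun i => key i = k), Real.exp (-(lam i ^ 2 / 2)))
          ≤ ((Finset.range N).filter (fun i => key i = k)).card • r ^ k :=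
            Finset.sum_le_card_nsmul _ _ _ hbound
        _ = (((Finset.range N).filter (fun i => key i = k)).card : ℝ) * r ^ k := by
            rw [nsmul_eq_mul]
        _ ≤ C0 * ((k : ℝ) + 2) ^ m * r ^ k :=
            mul_le_mul_of_nonneg_right hcard (by positivity)
    calc (∑ k ∈ (Finset.range N).image key,
          ∑ i ∈ (Finset.range N).filter (fun i => key i = k), Real.exp (-(lam i ^ 2 / 2)))
        ≤ ∑ k ∈ (Finset.range N).image key, C0 * ((k : ℝ) + 2) ^ m * r ^ k :=
          Finset.sum_le_sum hinner
      _ ≤ G := Summable.sum_le_tsum _ (fun k _ => by positivity) hgsum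
  -- put everything together
  refine ⟨1 / (δ * Real.sqrt π) * G + 1, by positivity, δ ^ 2 / 2, by positivity, ?_⟩
  intro t ht
  have hst : (1 : ℝ) ≤ Real.sqrt t := by
    rw [show (1 : ℝ) = Real.sqrt 1 from (Real.sqrt_one).symm]
    exact Real.sqrt_le_sqrt ht
  have hπ : 0 < Real.sqrt π := Real.sqrt_pos.2 Real.pi_pos
  have hexp : 0 < Real.exp (-(δ ^ 2 / 2 * t)) := Real.exp_pos _
  have hterm : ∀ n : ℕ, (1 / 2 : ℝ) * erfc (|lam n| * Real.sqrt t)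
      ≤ 1 / (δ * Real.sqrt π) * Real.exp (-(δ ^ 2 / 2 * t)) * Real.exp (-(lam n ^ 2 / 2)) := by
    intro n
    set x : ℝ := |lam n| * Real.sqrt t with hx_def
    have hxδ : δ ≤ x := by
      calc δ = δ * 1 := (mul_one δ).symm
        _ ≤ |lam n| * Real.sqrt t :=
          mul_le_mul (hδlam n) hst zero_le_one (abs_nonneg _)
    have hx0 : 0 < x := lt_of_lt_of_le hδ0 hxδ
    have hxx : x * x = lam n ^ 2 * t := by
      rw [hx_def]
      have : Real.sqrt t * Real.sqrt t = t := Real.mul_self_sqrt (by linarith)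
      rw [show |lam n| * Real.sqrt t * (|lam n| * Real.sqrt t)
          = |lam n| * |lam n| * (Real.sqrt t * Real.sqrt t) by ring, this,
        ← abs_mul, abs_mul_self]
      ring
    have hld : δ ^ 2 ≤ lam n ^ 2 := by
      have := hδlam n
      nlinarith [abs_nonneg (lam n), sq_abs (lam n)]
    have hexp_split : Real.exp (-(x * x))
        ≤ Real.exp (-(δ ^ 2 / 2 * t)) * Real.exp (-(lam n ^ 2 / 2)) := by
      rw [← Real.exp_add]
      apply Real.exp_le_exp.2
      rw [hxx]
      nlinarith [mul_nonneg (sub_nonneg.2 hld) (by linarith : (0:ℝ) ≤ t - 1/2)]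
    calc (1 / 2 : ℝ) * erfc x
        ≤ (1 / 2 : ℝ) * (2 / (x * Real.sqrt π) * Real.exp (-(x * x))) :=
          mul_le_mul_of_nonneg_left (erfc_le_aux hx0) (by norm_num)
      _ = 1 / (x * Real.sqrt π) * Real.exp (-(x * x)) := by ring
      _ ≤ 1 / (δ * Real.sqrt π) * Real.exp (-(x * x)) := by
          apply mul_le_mul_of_nonneg_right _ (Real.exp_pos _).le
          apply one_div_le_one_div_of_le (by positivity)
          exact mul_le_mul_of_nonneg_right hxδ hπ.le
      _ ≤ 1 / (δ * Real.sqrt π) * (Real.exp (-(δ ^ 2 / 2 * t)) * Real.exp (-(lam n ^ 2 / 2))) :=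
          mul_le_mul_of_nonneg_left hexp_split (by positivity)
      _ = 1 / (δ * Real.sqrt π) * Real.exp (-(δ ^ 2 / 2 * t)) * Real.exp (-(lam n ^ 2 / 2)) := by
          ring
  have hfinal : ∀ N : ℕ, (∑ n ∈ Finset.range N, (1 / 2 : ℝ) * erfc (|lam n| * Real.sqrt t))
      ≤ (1 / (δ * Real.sqrt π) * G + 1) * Real.exp (-(δ ^ 2 / 2 * t)) := by
    intro N
    calc (∑ n ∈ Finset.range N, (1 / 2 : ℝ) * erfc (|lam n| * Real.sqrt t))
        ≤ ∑ n ∈ Finset.range N,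
            1 / (δ * Real.sqrt π) * Real.exp (-(δ ^ 2 / 2 * t)) * Real.exp (-(lam n ^ 2 / 2)) :=
          Finset.sum_le_sum fun n _ => hterm n
      _ = 1 / (δ * Real.sqrt π) * Real.exp (-(δ ^ 2 / 2 * t))
            * ∑ n ∈ Finset.range N, Real.exp (-(lam n ^ 2 / 2)) := by
          rw [Finset.mul_sum]
      _ ≤ 1 / (δ * Real.sqrt π) * Real.exp (-(δ ^ 2 / 2 * t)) * G :=
          mul_le_mul_of_nonneg_left (hB N) (by positivity)
      _ ≤ (1 / (δ * Real.sqrt π) * G + 1) * Real.exp (-(δ ^ 2 / 2 * t)) := by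
          nlinarith [hexp.le]
  exact Real.tsum_le_of_sum_range_le
    (fun n => mul_nonneg (by norm_num) (erfc_nonneg _)) hfinal
end

section
/- For each integer ℓ with 0 ≤ ℓ ≤ 5, the real number E(ℓ) = (1/3)·Σ_{k=1}^{5} cot(kπ/6)·cot(5kπ/6)·sin²(kℓπ/6) satisfies: E(0) = 0, E(1) = E(5) = −2/3, E(2) = E(4) = −5/3, and E(3) = −2. -/
open Finset Real

/-- The lens-space eta sum `E(ℓ) = (1/3)·Σ_{k=1}^{5} cot(kπ/6)·cot(5kπ/6)·sin²(kℓπ/6)`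
for `S³/ℤ_6`. -/
noncomputable def E (ℓ : ℤ) : ℝ :=
  (1 / 3) * ∑ k ∈ Finset.Icc (1 : ℕ) 5,
    Real.cot ((k : ℝ) * π / 6) * Real.cot (5 * (k : ℝ) * π / 6)
      * Real.sin ((k : ℝ) * (ℓ : ℝ) * π / 6) ^ 2


lemma sin6 (m r : ℝ) (n : ℕ) (h : m = r + 6*n) :
    Real.sin (m*π/6) = (-1)^n * Real.sin (r*π/6) := by
  subst h
  have : (r + 6*(n:ℝ))*π/6 = r*π/6 + n*π := by ring
  rw [this, Real.sin_add_nat_mul_pi]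

lemma cot6 (m r : ℝ) (n : ℕ) (h : m = r + 6*n) :
    Real.cot (m*π/6) = Real.cot (r*π/6) := by
  subst h
  have h1 : (r + 6*(n:ℝ))*π/6 = r*π/6 + n*π := by ring
  rw [h1, Real.cot_eq_cos_div_sin, Real.cot_eq_cos_div_sin,
    Real.sin_add_nat_mul_pi, show ((n:ℝ)*π) = ((n:ℤ):ℝ)*π by push_cast; ring,
    Real.cos_add_int_mul_pi]
  simp only [zpow_natCast]
  rw [mul_div_mul_left _ _ (by positivity : ((-1:ℝ))^n ≠ 0)]

lemma s2 : Real.sin (2*π/6) = Real.sqrt 3 / 2 := by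
  rw [show (2:ℝ)*π/6 = π/3 by ring, Real.sin_pi_div_three]
lemma s3 : Real.sin (3*π/6) = 1 := by
  rw [show (3:ℝ)*π/6 = π/2 by ring, Real.sin_pi_div_two]
lemma s4 : Real.sin (4*π/6) = Real.sqrt 3 / 2 := by
  rw [show (4:ℝ)*π/6 = π - π/3 by ring, Real.sin_pi_sub, Real.sin_pi_div_three]
lemma s5 : Real.sin (5*π/6) = 1/2 := by
  rw [show (5:ℝ)*π/6 = π - π/6 by ring, Real.sin_pi_sub, Real.sin_pi_div_six]
lemma s6 : Real.sin (6*π/6) = 0 := by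
  rw [show (6:ℝ)*π/6 = π by ring, Real.sin_pi]
lemma s8 : Real.sin (8*π/6) = -(Real.sqrt 3 / 2) := by
  rw [sin6 8 2 1 (by norm_num), s2]; ring
lemma s9 : Real.sin (9*π/6) = -1 := by
  rw [sin6 9 3 1 (by norm_num), s3]; ring
lemma s10 : Real.sin (10*π/6) = -(Real.sqrt 3 / 2) := by
  rw [sin6 10 4 1 (by norm_num), s4]; ring
lemma s12 : Real.sin (12*π/6) = 0 := by
  rw [sin6 12 6 1 (by norm_num), s6]; ring
lemma s15 : Real.sin (15*π/6) = 1 := by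
  rw [sin6 15 3 2 (by norm_num), s3]; ring
lemma s16 : Real.sin (16*π/6) = Real.sqrt 3 / 2 := by
  rw [sin6 16 4 2 (by norm_num), s4]; ring
lemma s20 : Real.sin (20*π/6) = -(Real.sqrt 3 / 2) := by
  rw [sin6 20 8 2 (by norm_num), s8]; ring
lemma s25 : Real.sin (25*π/6) = 1/2 := by
  rw [sin6 25 1 4 (by norm_num), show (1:ℝ)*π/6 = π/6 by ring, Real.sin_pi_div_six]; ring

lemma c1 : Real.cot (π/6) = Real.sqrt 3 := by
  rw [Real.cot_eq_cos_div_sin, Real.cos_pi_div_six, Real.sin_pi_div_six]; ring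
lemma c2 : Real.cot (2*π/6) = Real.sqrt 3 / 3 := by
  rw [Real.cot_eq_cos_div_sin, show (2:ℝ)*π/6 = π/3 by ring,
    Real.cos_pi_div_three, Real.sin_pi_div_three]
  rw [div_eq_div_iff (by positivity) (by norm_num)]
  nlinarith [Real.sq_sqrt (by norm_num : (0:ℝ) ≤ 3), Real.sqrt_nonneg 3]
lemma c3 : Real.cot (3*π/6) = 0 := by
  rw [show (3:ℝ)*π/6 = π/2 by ring, Real.cot_eq_cos_div_sin]
  simp
lemma c4 : Real.cot (4*π/6) = -(Real.sqrt 3 / 3) := by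
  rw [Real.cot_eq_cos_div_sin, show (4:ℝ)*π/6 = π - π/3 by ring,
    Real.cos_pi_sub, Real.sin_pi_sub, Real.cos_pi_div_three, Real.sin_pi_div_three]
  have := c2
  rw [Real.cot_eq_cos_div_sin, show (2:ℝ)*π/6 = π/3 by ring,
    Real.cos_pi_div_three, Real.sin_pi_div_three] at this
  rw [neg_div, this]
lemma c5 : Real.cot (5*π/6) = -Real.sqrt 3 := by
  rw [Real.cot_eq_cos_div_sin, show (5:ℝ)*π/6 = π - π/6 by ring,
    Real.cos_pi_sub, Real.sin_pi_sub, Real.cos_pi_div_six, Real.sin_pi_div_six]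
  ring
lemma c10 : Real.cot (10*π/6) = -(Real.sqrt 3 / 3) := by
  rw [cot6 10 4 1 (by norm_num), c4]
lemma c15 : Real.cot (15*π/6) = 0 := by
  rw [cot6 15 3 2 (by norm_num), c3]
lemma c20 : Real.cot (20*π/6) = Real.sqrt 3 / 3 := by
  rw [cot6 20 2 3 (by norm_num), c2]
lemma c25 : Real.cot (25*π/6) = Real.sqrt 3 := by
  rw [cot6 25 1 4 (by norm_num), show (1:ℝ)*π/6 = π/6 by ring, c1]

/-- Explicit evaluation: `E(0) = 0`, `E(1) = E(5) = −2/3`, `E(2) = E(4) = −5/3`,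
`E(3) = −2`. -/
theorem stmt_18 :
    E 0 = 0 ∧ E 1 = -(2 / 3) ∧ E 5 = -(2 / 3) ∧ E 2 = -(5 / 3) ∧ E 4 = -(5 / 3) ∧
    E 3 = -2 := by
  have hq := Real.sq_sqrt (by norm_num : (0:ℝ) ≤ 3)
  have hn := Real.sqrt_nonneg 3
  refine ⟨?_, ?_, ?_, ?_, ?_, ?_⟩ <;>
  · rw [E, show Finset.Icc (1:ℕ) 5 = {1,2,3,4,5} from rfl]
    norm_num [Finset.sum_insert, Finset.mem_insert, c1, c2, c3, c4, c5, c10, c15, c20, c25,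
      s2, s3, s4, s5, s6, s8, s9, s10, s12, s15, s16, s20, s25]
    try nlinarith [hq, hn]
end
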